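/- Let X be a countable set, let μ, ν ∈ Prob(X), and let φ, ψ be transition probabilities on X. If there exist ε>0 and x₀ ∈ X such that ‖φ(x,·) − φ(x₀,·)‖₁ < ε for every x ∈ Supp(μ) ∪ Supp(ν), then ‖(μ*φ)*ψ − (ν*φ)*ψ‖₁ < 2ε. -/

import Mathlib

set_option maxHeartbeats 4000000


noncomputable def l1dist {X : Type*} (μ ν : X → ℝ) : ℝ := ∑' y, |μ y - ν y|

def IsProb {X : Type*} (μ : X → ℝ) : Prop := (∀ x, 0 ≤ μ x) ∧ HasSum μ 1

def IsTransProb {X : Type*} (P : X → X → ℝ) : Prop := ∀ x, IsProb (P x)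

noncomputable def mconv {X : Type*} (μ : X → ℝ) (φ : X → X → ℝ) : X → ℝ :=
  fun y => ∑' x, μ x * φ x y

noncomputable def kpow {X : Type*} [DecidableEq X] (P : X → X → ℝ) : ℕ → X → X → ℝ
  | 0 => fun x y => if x = y then 1 else 0
  | n + 1 => fun x y => ∑' z, kpow P n x z * P z y

section Aux

variable {X : Type*}

lemma IsProb.summable' {μ : X → ℝ} (h : IsProb μ) : Summable μ := h.2.summable

lemma IsProb.tsum' {μ : X → ℝ} (h : IsProb μ) : ∑' x, μ x = 1 := h.2.tsum_eq

lemma IsProb.le_one {μ : X → ℝ} (h : IsProb μ) (x : X) : μ x ≤ 1 :=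
  le_hasSum h.2 x (fun _ _ => h.1 _)

lemma summable_abs_sub {A B : X → ℝ} (hA0 : ∀ z, 0 ≤ A z) (hB0 : ∀ z, 0 ≤ B z)
    (hA : Summable A) (hB : Summable B) : Summable fun z => |A z - B z| :=
  Summable.of_nonneg_of_le (fun _ => abs_nonneg _)
    (fun z => (abs_sub (A z) (B z)).trans (by
      rw [abs_of_nonneg (hA0 z), abs_of_nonneg (hB0 z)])) (hA.add hB)

/-- Joint summability of `(p) ↦ c p.1 * ψ p.1 p.2` for summable nonneg `c`
and transition probability `ψ`. -/
lemma summable_joint {c : X → ℝ} {ψ : X → X → ℝ} (hc0 : ∀ z, 0 ≤ c z)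
    (hc : Summable c) (hψ : IsTransProb ψ) :
    Summable (fun p : X × X => c p.1 * ψ p.1 p.2) := by
  have hf : 0 ≤ fun p : X × X => c p.1 * ψ p.1 p.2 :=
    fun p => mul_nonneg (hc0 _) ((hψ _).1 _)
  rw [summable_prod_of_nonneg hf]
  constructor
  · intro z
    simpa using (hψ z).summable'.mul_left (c z)
  · have h1 : ∀ z, (∑' y, c z * ψ z y) = c z := by
      intro z
      rw [tsum_mul_left, (hψ z).tsum', mul_one]
    simpa [h1] using hc

lemma summable_snd {g : X × X → ℝ} (hg0 : ∀ p, 0 ≤ g p) (hg : Summable g) :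
    Summable fun y => ∑' x, g (x, y) := by
  have hf : 0 ≤ fun p : X × X => g (p.2, p.1) := fun p => hg0 _
  have hg' : Summable fun p : X × X => g (p.2, p.1) := by
    exact hg.prod_symm
  have h2 := (summable_prod_of_nonneg hf).1 hg'
  simpa using h2.2

lemma isProb_mconv {μ : X → ℝ} {φ : X → X → ℝ} (hμ : IsProb μ) (hφ : IsTransProb φ) :
    IsProb (mconv μ φ) := by
  have hg : Summable (fun p : X × X => μ p.1 * φ p.1 p.2) :=
    summable_joint hμ.1 hμ.summable' hφ
  have hg0 : ∀ p : X × X, 0 ≤ μ p.1 * φ p.1 p.2 :=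
    fun p => mul_nonneg (hμ.1 _) ((hφ _).1 _)
  have h2 : Summable fun y => ∑' x, μ x * φ x y :=
    summable_snd hg0 hg
  refine ⟨fun y => tsum_nonneg fun x => mul_nonneg (hμ.1 _) ((hφ _).1 _), ?_⟩
  have hiff : HasSum (mconv μ φ) 1 ↔ ∑' y, mconv μ φ y = 1 := Summable.hasSum_iff h2
  rw [hiff]
  have hcomm : (∑' (y) (x), μ x * φ x y) = ∑' (x) (y), μ x * φ x y :=
    Summable.tsum_comm (f := fun x y => μ x * φ x y) hg
  calc ∑' y, mconv μ φ y = ∑' (x) (y), μ x * φ x y := hcomm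
    _ = 1 := by
        have : ∀ x, (∑' y, μ x * φ x y) = μ x := fun x => by
          rw [tsum_mul_left, (hφ x).tsum', mul_one]
        simp_rw [this]
        exact hμ.tsum'

/-- Triangle inequality for `l1dist`. -/
lemma l1dist_triangle {A B c : X → ℝ} (h1 : Summable fun z => |A z - c z|)
    (h2 : Summable fun z => |c z - B z|) :
    l1dist A B ≤ l1dist A c + l1dist c B := by
  unfold l1dist
  rw [← Summable.tsum_add h1 h2]
  refine Summable.tsum_le_tsum (fun z => abs_sub_le _ _ _) ?_ (h1.add h2)
  exact Summable.of_nonneg_of_le (fun z => abs_nonneg _) (fun z => abs_sub_le _ _ _) (h1.add h2)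

/-- Convolving with a transition probability contracts `l1dist`. -/
lemma l1dist_mconv_le {A B : X → ℝ} {ψ : X → X → ℝ} (hA : IsProb A) (hB : IsProb B)
    (hψ : IsTransProb ψ) : l1dist (mconv A ψ) (mconv B ψ) ≤ l1dist A B := by
  have hD0 : ∀ z, 0 ≤ |A z - B z| := fun z => abs_nonneg _
  have hDs : Summable fun z => |A z - B z| :=
    summable_abs_sub hA.1 hB.1 hA.summable' hB.summable'
  have hg : Summable (fun p : X × X => |A p.1 - B p.1| * ψ p.1 p.2) :=
    summable_joint hD0 hDs hψ
  have hsum1 : ∀ y, Summable fun z => A z * ψ z y := fun y =>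
    Summable.of_nonneg_of_le (fun z => mul_nonneg (hA.1 _) ((hψ _).1 _))
      (fun z => mul_le_of_le_one_right (hA.1 _) ((hψ z).le_one y)) hA.summable'
  have hsum2 : ∀ y, Summable fun z => B z * ψ z y := fun y =>
    Summable.of_nonneg_of_le (fun z => mul_nonneg (hB.1 _) ((hψ _).1 _))
      (fun z => mul_le_of_le_one_right (hB.1 _) ((hψ z).le_one y)) hB.summable'
  have hg0 : ∀ p : X × X, 0 ≤ |A p.1 - B p.1| * ψ p.1 p.2 :=
    fun p => mul_nonneg (hD0 _) ((hψ _).1 _)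
  have hRHSsum : Summable fun y => ∑' z, |A z - B z| * ψ z y :=
    summable_snd hg0 hg
  have key : ∀ y, |mconv A ψ y - mconv B ψ y| ≤ ∑' z, |A z - B z| * ψ z y := by
    intro y
    have hslice : Summable fun z => |A z - B z| * ψ z y := by simpa using hg.prod_symm.prod_factor y
    have heq : mconv A ψ y - mconv B ψ y = ∑' z, (A z - B z) * ψ z y := by
      unfold mconv
      rw [← Summable.tsum_sub (hsum1 y) (hsum2 y)]
      congr 1; funext z; ring
    rw [heq]
    have habs : Summable fun z => ‖(A z - B z) * ψ z y‖ := by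
      simpa only [Real.norm_eq_abs, abs_mul, abs_of_nonneg ((hψ _).1 _)] using hslice
    have := norm_tsum_le_tsum_norm habs
    simpa only [Real.norm_eq_abs, abs_mul, abs_of_nonneg ((hψ _).1 _)] using this
  calc l1dist (mconv A ψ) (mconv B ψ) ≤ ∑' y, ∑' z, |A z - B z| * ψ z y := by
        refine Summable.tsum_le_tsum key ?_ hRHSsum
        exact Summable.of_nonneg_of_le (fun _ => abs_nonneg _) key hRHSsum
    _ = ∑' z, ∑' y, |A z - B z| * ψ z y :=
        Summable.tsum_comm (f := fun z y => |A z - B z| * ψ z y) hg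
    _ = l1dist A B := by
        unfold l1dist
        congr 1; funext z; rw [tsum_mul_left, (hψ z).tsum', mul_one]

/-- The key estimate: the convolved measure stays within `ε` of `φ x₀`. -/
lemma l1dist_mconv_lt {μ : X → ℝ} {φ : X → X → ℝ} {ε : ℝ} {x₀ : X}
    (hμ : IsProb μ) (hφ : IsTransProb φ) (hε : 0 < ε)
    (h : ∀ x, 0 < μ x → l1dist (φ x) (φ x₀) < ε) :
    l1dist (mconv μ φ) (φ x₀) < ε := by
  have habs : ∀ x, Summable fun z => |φ x z - φ x₀ z| := fun x =>
    summable_abs_sub (hφ x).1 (hφ x₀).1 (hφ x).summable' (hφ x₀).summable'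
  have hd2 : ∀ x, (∑' z, |φ x z - φ x₀ z|) ≤ 2 := by
    intro x
    calc (∑' z, |φ x z - φ x₀ z|) ≤ ∑' z, (φ x z + φ x₀ z) := by
          refine Summable.tsum_le_tsum (fun z => (abs_sub _ _).trans ?_) (habs x)
            ((hφ x).summable'.add (hφ x₀).summable')
          rw [abs_of_nonneg ((hφ x).1 _), abs_of_nonneg ((hφ x₀).1 _)]
      _ = 2 := by
          rw [Summable.tsum_add (hφ x).summable' (hφ x₀).summable', (hφ x).tsum', (hφ x₀).tsum']
          norm_num
  have hd0 : ∀ x, 0 ≤ ∑' z, |φ x z - φ x₀ z| := fun x =>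
    tsum_nonneg fun z => abs_nonneg _
  -- summability of x ↦ μ x * d x
  have hfs : Summable fun x => μ x * ∑' z, |φ x z - φ x₀ z| :=
    Summable.of_nonneg_of_le (fun x => mul_nonneg (hμ.1 x) (hd0 x))
      (fun x => mul_le_mul_of_nonneg_left (hd2 x) (hμ.1 x)) (hμ.summable'.mul_right 2)
  -- joint summability of (x, z) ↦ μ x * |φ x z - φ x₀ z|
  have hg : Summable (fun p : X × X => μ p.1 * |φ p.1 p.2 - φ x₀ p.2|) := by
    have hf : 0 ≤ fun p : X × X => μ p.1 * |φ p.1 p.2 - φ x₀ p.2| :=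
      fun p => mul_nonneg (hμ.1 _) (abs_nonneg _)
    rw [summable_prod_of_nonneg hf]
    constructor
    · intro x
      simpa using (habs x).mul_left (μ x)
    · have h1 : ∀ x, (∑' z, μ x * |φ x z - φ x₀ z|) = μ x * ∑' z, |φ x z - φ x₀ z| := by
        intro x; rw [tsum_mul_left]
      simpa [h1] using hfs
  have hg0 : ∀ p : X × X, 0 ≤ μ p.1 * |φ p.1 p.2 - φ x₀ p.2| :=
    fun p => mul_nonneg (hμ.1 _) (abs_nonneg _)
  have hRHSsum : Summable fun z => ∑' x, μ x * |φ x z - φ x₀ z| :=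
    summable_snd hg0 hg
  have key : ∀ z, |mconv μ φ z - φ x₀ z| ≤ ∑' x, μ x * |φ x z - φ x₀ z| := by
    intro z
    have h1 : Summable fun x => μ x * φ x z :=
      Summable.of_nonneg_of_le (fun x => mul_nonneg (hμ.1 _) ((hφ _).1 _))
        (fun x => mul_le_of_le_one_right (hμ.1 _) ((hφ x).le_one z)) hμ.summable'
    have h2 : Summable fun x => μ x * φ x₀ z := hμ.summable'.mul_right _
    have heq : mconv μ φ z - φ x₀ z = ∑' x, (μ x * φ x z - μ x * φ x₀ z) := by
      unfold mconv
      rw [Summable.tsum_sub h1 h2, tsum_mul_right, hμ.tsum', one_mul]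
    rw [heq]
    have hslice : Summable fun x => μ x * |φ x z - φ x₀ z| := by
      simpa using hg.prod_symm.prod_factor z
    have habs' : Summable fun x => ‖μ x * φ x z - μ x * φ x₀ z‖ := by
      simpa only [Real.norm_eq_abs, ← mul_sub, abs_mul, abs_of_nonneg (hμ.1 _)] using hslice
    have := norm_tsum_le_tsum_norm habs'
    simpa only [Real.norm_eq_abs, ← mul_sub, abs_mul, abs_of_nonneg (hμ.1 _)] using this
  obtain ⟨i, hi⟩ : ∃ i, 0 < μ i := by
    by_contra hc
    push_neg at hc
    have hz : μ = 0 := funext fun x => le_antisymm (hc x) (hμ.1 x)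
    rw [hz] at hμ
    simpa using hμ.2.tsum_eq.symm.trans tsum_zero
  calc l1dist (mconv μ φ) (φ x₀) ≤ ∑' z, ∑' x, μ x * |φ x z - φ x₀ z| := by
        refine Summable.tsum_le_tsum key ?_ hRHSsum
        exact Summable.of_nonneg_of_le (fun _ => abs_nonneg _) key hRHSsum
    _ = ∑' x, ∑' z, μ x * |φ x z - φ x₀ z| :=
        Summable.tsum_comm (f := fun x z => μ x * |φ x z - φ x₀ z|) hg
    _ = ∑' x, μ x * ∑' z, |φ x z - φ x₀ z| := by
        congr 1; funext x; rw [tsum_mul_left]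
    _ < ∑' x, μ x * ε := by
        refine Summable.tsum_lt_tsum (i := i) (fun x => ?_) ?_ hfs (hμ.summable'.mul_right ε)
        · rcases eq_or_lt_of_le (hμ.1 x) with hx | hx
          · rw [← hx]; simp
          · exact mul_le_mul_of_nonneg_left (h x hx).le (hμ.1 x)
        · exact mul_lt_mul_of_pos_left (h i hi) hi
    _ = ε := by rw [tsum_mul_right, hμ.tsum', one_mul]

end Aux

theorem stmt7 {X : Type*} [Countable X] (μ ν : X → ℝ) (hμ : IsProb μ) (hν : IsProb ν)
    (φ ψ : X → X → ℝ) (hφ : IsTransProb φ) (hψ : IsTransProb ψ)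
    (ε : ℝ) (hε : 0 < ε) (x₀ : X)
    (h : ∀ x : X, (0 < μ x ∨ 0 < ν x) → l1dist (φ x) (φ x₀) < ε) :
    l1dist (mconv (mconv μ φ) ψ) (mconv (mconv ν φ) ψ) < 2 * ε := by
  have hA : IsProb (mconv μ φ) := isProb_mconv hμ hφ
  have hB : IsProb (mconv ν φ) := isProb_mconv hν hφ
  have step1 : l1dist (mconv (mconv μ φ) ψ) (mconv (mconv ν φ) ψ)
      ≤ l1dist (mconv μ φ) (mconv ν φ) := l1dist_mconv_le hA hB hψ
  have h1 : l1dist (mconv μ φ) (φ x₀) < ε :=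
    l1dist_mconv_lt hμ hφ hε (fun x hx => h x (Or.inl hx))
  have h2 : l1dist (mconv ν φ) (φ x₀) < ε :=
    l1dist_mconv_lt hν hφ hε (fun x hx => h x (Or.inr hx))
  have hcomm : l1dist (φ x₀) (mconv ν φ) = l1dist (mconv ν φ) (φ x₀) := by
    unfold l1dist; congr 1; funext z; rw [abs_sub_comm]
  have htri : l1dist (mconv μ φ) (mconv ν φ)
      ≤ l1dist (mconv μ φ) (φ x₀) + l1dist (φ x₀) (mconv ν φ) := by
    refine l1dist_triangle ?_ ?_
    · exact summable_abs_sub hA.1 (hφ x₀).1 hA.summable' (hφ x₀).summable'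
    · exact summable_abs_sub (hφ x₀).1 hB.1 (hφ x₀).summable' hB.summable'
  calc l1dist (mconv (mconv μ φ) ψ) (mconv (mconv ν φ) ψ)
      ≤ l1dist (mconv μ φ) (mconv ν φ) := step1
    _ ≤ l1dist (mconv μ φ) (φ x₀) + l1dist (φ x₀) (mconv ν φ) := htri
    _ < ε + ε := by rw [hcomm]; exact add_lt_add h1 h2
    _ = 2 * ε := by ring
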